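/- In the same setting, D_p(x,y) ≥ ‖y/p‖^p · f_p(‖x‖/‖y‖) for all x, y ∈ X with y ≠ 0, where f_p(t) = p + q·t^p − p·q·t. In particular D_p(x,y) ≥ 0, with equality if and only if x = y, provided X is strictly convex. -/

import Mathlib

/-- Lower bound and positivity for the divergence `D_p`.  For all `x, y` with
`y ≠ 0`, `D_p(x,y) ≥ ‖y/p‖^p · f_p(‖x‖/‖y‖)` where `f_p(t) = p + q·t^p − p·q·t`;
and (with `X` strictly convex) `D_p(x,y) ≥ 0` with equality iff `x = y`. -/
theorem divergence_lower_bound (X : Type*) [NormedAddCommGroup X] [NormedSpace ℝ X]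
    [CompleteSpace X] [StrictConvexSpace ℝ X]
    (p q : ℝ) (hp : 1 < p) (hpq : 1 / p + 1 / q = 1)
    (hnorm : ∀ x : X, x ≠ 0 → DifferentiableAt ℝ (fun y : X => ‖y‖) x)
    (T : X → (X →L[ℝ] ℝ)) (hT0 : T 0 = 0)
    (hTnorm : ∀ x : X, x ≠ 0 → ‖T x‖ = q * (‖x‖ / p) ^ (p - 1))
    (hTxx : ∀ x : X, T x x = p * q * (‖x‖ / p) ^ p)
    (D : X → X → ℝ)
    (hD : ∀ x y : X, D x y = q * (‖x‖ / p) ^ p + p * (‖T y‖ / q) ^ q - T y x) :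
    (∀ x y : X, y ≠ 0 →
      (‖y‖ / p) ^ p * (p + q * (‖x‖ / ‖y‖) ^ p - p * q * (‖x‖ / ‖y‖)) ≤ D x y) ∧
    (∀ x y : X, 0 ≤ D x y ∧ (D x y = 0 ↔ x = y)) := by
  have hcon : Real.HolderConjugate p q := Real.holderConjugate_iff.mpr ⟨hp, by rw [← one_div, ← one_div]; exact hpq⟩
  have hp0 : (0:ℝ) < p := hcon.pos
  have hq0 : (0:ℝ) < q := hcon.symm.pos
  have hmul : (p - 1) * q = p := hcon.sub_one_mul_conj
  have hadd : p * q = p + q := hcon.mul_eq_add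
  -- second term simplification
  have hTq : ∀ y : X, y ≠ 0 → (‖T y‖ / q) ^ q = (‖y‖ / p) ^ p := by
    intro y hy
    have h0 : ‖T y‖ / q = (‖y‖ / p) ^ (p - 1) := by
      rw [hTnorm y hy]; field_simp
    rw [h0, ← Real.rpow_mul (div_nonneg (norm_nonneg y) hp0.le), hmul]
  -- the right hand side of the main inequality, rewritten
  have hyd : ∀ y : X, y ≠ 0 → (0:ℝ) < ‖y‖ / p := fun y hy =>
    div_pos (norm_pos_iff.mpr hy) hp0
  have hrhs : ∀ x y : X, y ≠ 0 →
      (‖y‖ / p) ^ p * (p + q * (‖x‖ / ‖y‖) ^ p - p * q * (‖x‖ / ‖y‖))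
        = q * (‖x‖ / p) ^ p + p * (‖y‖ / p) ^ p - ‖T y‖ * ‖x‖ := by
    intro x y hy
    have hyn : (0:ℝ) < ‖y‖ := norm_pos_iff.mpr hy
    have h1 : (‖y‖ / p) ^ p * (‖x‖ / ‖y‖) ^ p = (‖x‖ / p) ^ p := by
      rw [← Real.mul_rpow (hyd y hy).le (div_nonneg (norm_nonneg x) hyn.le)]
      congr 1
      field_simp
    have h2 : (‖y‖ / p) ^ p = (‖y‖ / p) ^ (p - 1) * (‖y‖ / p) := by
      rw [← Real.rpow_add_one (hyd y hy).ne' (p - 1), sub_add_cancel]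
    have h3 : p * (‖y‖ / p) ^ p * (‖x‖ / ‖y‖) = (‖y‖ / p) ^ (p - 1) * ‖x‖ := by
      rw [h2]; field_simp
    rw [hTnorm y hy]
    linear_combination q * h1 - q * h3
  -- main inequality
  have main : ∀ x y : X, y ≠ 0 →
      (‖y‖ / p) ^ p * (p + q * (‖x‖ / ‖y‖) ^ p - p * q * (‖x‖ / ‖y‖)) ≤ D x y := by
    intro x y hy
    rw [hrhs x y hy, hD, hTq y hy]
    have : T y x ≤ ‖T y‖ * ‖x‖ :=
      (le_abs_self _).trans ((T y).le_opNorm x)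
    linarith
  refine ⟨main, ?_⟩
  -- f_p(t) ≥ 0 with equality iff t = 1, via Bernoulli
  have fnonneg : ∀ t : ℝ, 0 ≤ t → 0 ≤ p + q * t ^ p - p * q * t := by
    intro t ht
    have hb : 1 + p * (t - 1) ≤ t ^ p := by
      have := one_add_mul_self_le_rpow_one_add (by linarith : (-1:ℝ) ≤ t - 1) hp.le
      simpa using this
    nlinarith
  have fpos : ∀ t : ℝ, 0 ≤ t → t ≠ 1 → 0 < p + q * t ^ p - p * q * t := by
    intro t ht ht1
    have hb : 1 + p * (t - 1) < t ^ p := by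
      have := one_add_mul_self_lt_rpow_one_add (by linarith : (-1:ℝ) ≤ t - 1)
        (by intro h; exact ht1 (by linarith)) hp
      simpa using this
    nlinarith
  intro x y
  by_cases hy : y = 0
  · -- y = 0 case
    subst hy
    have hD0 : D x 0 = q * (‖x‖ / p) ^ p := by
      rw [hD, hT0]
      simp [Real.zero_rpow (by positivity : q ≠ 0)]
    constructor
    · rw [hD0]; positivity
    · rw [hD0]
      constructor
      · intro h
        have : (‖x‖ / p) ^ p = 0 := by
          rcases mul_eq_zero.mp h with h' | h'
          · exact absurd h' hq0.ne'
          · exact h'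
        have hx0 : ‖x‖ / p = 0 := (Real.rpow_eq_zero (by positivity) hp0.ne').mp this
        have hx1 : ‖x‖ = 0 := by
          rcases div_eq_zero_iff.mp hx0 with h' | h'
          · exact h'
          · exact absurd h' hp0.ne'
        exact norm_eq_zero.mp hx1
      · intro h; subst h; simp [Real.zero_rpow hp0.ne']
  · -- y ≠ 0 case
    have hyn : (0:ℝ) < ‖y‖ := norm_pos_iff.mpr hy
    have ht0 : 0 ≤ ‖x‖ / ‖y‖ := div_nonneg (norm_nonneg x) hyn.le
    have hypow : (0:ℝ) < (‖y‖ / p) ^ p := Real.rpow_pos_of_pos (hyd y hy) p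
    have hge := main x y hy
    have hgen : 0 ≤ (‖y‖ / p) ^ p * (p + q * (‖x‖ / ‖y‖) ^ p - p * q * (‖x‖ / ‖y‖)) :=
      mul_nonneg hypow.le (fnonneg _ ht0)
    refine ⟨le_trans hgen hge, ?_, ?_⟩
    · -- D x y = 0 → x = y
      intro hDeq
      have ht1 : ‖x‖ / ‖y‖ = 1 := by
        by_contra ht1
        have := mul_pos hypow (fpos _ ht0 ht1)
        linarith
      have hxy : ‖x‖ = ‖y‖ := (div_eq_one_iff_eq hyn.ne').mp ht1
      -- equality in the norm bound: T y x = ‖T y‖ * ‖x‖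
      have h5 : q * (‖x‖ / p) ^ p + p * (‖y‖ / p) ^ p - ‖T y‖ * ‖x‖ = 0 := by
        rw [← hrhs x y hy, ht1, Real.one_rpow]
        linear_combination (-((‖y‖ / p) ^ p)) * hadd
      have h2 : D x y = q * (‖x‖ / p) ^ p + p * (‖y‖ / p) ^ p - T y x := by
        rw [hD, hTq y hy]
      have heqTy : T y x = ‖T y‖ * ‖x‖ := by
        rw [h2] at hDeq
        linarith
      -- T y y = ‖T y‖ * ‖y‖
      have heqTyy : T y y = ‖T y‖ * ‖y‖ := by
        rw [hTxx, hTnorm y hy]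
        have h6 : (‖y‖ / p) ^ p = (‖y‖ / p) ^ (p - 1) * (‖y‖ / p) := by
          rw [← Real.rpow_add_one (hyd y hy).ne' (p - 1), sub_add_cancel]
        rw [h6]; field_simp
      have hTy0 : (0:ℝ) < ‖T y‖ := by
        rw [hTnorm y hy]
        positivity
      -- norm additivity
      have hsum : ‖x + y‖ = ‖x‖ + ‖y‖ := by
        have hle : T y (x + y) ≤ ‖T y‖ * ‖x + y‖ :=
          (le_abs_self _).trans ((T y).le_opNorm _)
        rw [map_add, heqTy, heqTyy, ← mul_add] at hle
        have h4 : ‖x‖ + ‖y‖ ≤ ‖x + y‖ := le_of_mul_le_mul_left hle hTy0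
        exact le_antisymm (norm_add_le x y) h4
      have hray : SameRay ℝ x y := sameRay_iff_norm_add.mpr hsum
      have h7 := hray.norm_smul_eq
      rw [hxy] at h7
      exact (smul_right_injective X hyn.ne' h7).symm
    · -- x = y → D x y = 0
      intro h; subst h
      rw [hD, hTq x hy, hTxx]
      linear_combination (-((‖x‖ / p) ^ p)) * hadd
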